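/- (Abduction.) Fix n : ℕ, parent sets pa : Fin n → Finset (Fin n) such that every j ∈ pa i satisfies j < i, and mechanisms f i : (Fin n → ℝ) → ℝ → ℝ satisfying locality (f i v = f i w whenever v j = w j for all j ∈ pa i). If in addition every slice u ↦ f i v u is a bijection of ℝ (for every i : Fin n and every v : Fin n → ℝ), then the solution map solve : (Fin n → ℝ) → (Fin n → ℝ) is a bijection, and its inverse is given by abduction: for every v : Fin n → ℝ, (solve⁻¹ v) i is the unique u₀ ∈ ℝ with f i v u₀ = v i. -/
import Mathlib


/-- Abduction: in a topologically ordered SCM whose mechanism slices `u ↦ f i v u`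
are all bijections of ℝ, the solution map `solve` is a bijection, and its inverse is
given by abduction: `(solve⁻¹ v) i` is the unique `u₀` with `f i v u₀ = v i`. -/
theorem scm_solve_bijective_abduction (n : ℕ) (pa : Fin n → Finset (Fin n))
    (hpa : ∀ i : Fin n, ∀ j ∈ pa i, j < i)
    (f : Fin n → (Fin n → ℝ) → ℝ → ℝ)
    (hloc : ∀ i : Fin n, ∀ v w : Fin n → ℝ, (∀ j ∈ pa i, v j = w j) → f i v = f i w)
    (hbij : ∀ (i : Fin n) (v : Fin n → ℝ), Function.Bijective (f i v))
    (solve : (Fin n → ℝ) → (Fin n → ℝ))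
    (hsolve : ∀ (u : Fin n → ℝ) (i : Fin n), solve u i = f i (solve u) (u i)) :
    Function.Bijective solve
    ∧ ∀ (v : Fin n → ℝ) (i : Fin n),
        f i v (Function.invFun solve v i) = v i
        ∧ ∀ u₀ : ℝ, f i v u₀ = v i → u₀ = Function.invFun solve v i := by
  classical
  -- abduction candidate inverse
  set g : (Fin n → ℝ) → Fin n → ℝ := fun v i => Function.invFun (f i v) (v i) with hg
  have hgspec : ∀ (v : Fin n → ℝ) (i : Fin n), f i v (g v i) = v i := by
    intro v i
    exact Function.invFun_eq ((hbij i v).2 (v i))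
  -- injectivity of solve
  have hinj : Function.Injective solve := by
    intro u u' h
    funext i
    have h1 : f i (solve u) (u i) = f i (solve u) (u' i) := by
      rw [← hsolve u i, h, ← hsolve u' i]
    exact (hbij i (solve u)).1 h1
  -- solve (g v) = v, by strong induction
  have key : ∀ (v : Fin n → ℝ), solve (g v) = v := by
    intro v
    have main : ∀ (m : ℕ) (i : Fin n), i.val < m → solve (g v) i = v i := by
      intro m
      induction m with
      | zero => intro i h; omega
      | succ m ih =>
        intro i _hi
        have hle : ∀ j ∈ pa i, solve (g v) j = v j := fun j hj =>
          ih j (by have := hpa i j hj; omega)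
        calc solve (g v) i = f i (solve (g v)) (g v i) := hsolve _ _
          _ = f i v (g v i) := by rw [hloc i (solve (g v)) v hle]
          _ = v i := hgspec v i
    funext i
    exact main (i.val + 1) i (Nat.lt_succ_self _)
  have hsurj : Function.Surjective solve := fun v => ⟨g v, key v⟩
  have hiv : ∀ v, Function.invFun solve v = g v := by
    intro v
    have := Function.leftInverse_invFun hinj (g v)
    rwa [key v] at this
  refine ⟨⟨hinj, hsurj⟩, fun v i => ⟨by rw [hiv]; exact hgspec v i, fun u₀ h => ?_⟩⟩
  rw [hiv]
  exact (hbij i v).1 (by rw [h, hgspec v i])
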